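/- arXiv:1411.7818 — 8 statements merged into one kernel-verified Lean document; each statement's English description precedes it below -/
import Mathlib

section
/- If G is a graph with domination number γ(G) ≤ Δ(G), then for every integer i with γ(G) ≤ i ≤ Δ(G), the i-quasiperfect domination number γ_{1i}(G) equals γ(G). -/
/-- `S` is a `k`-quasiperfect dominating set of `G`: every vertex not in `S` has
at least one and at most `k` neighbors in `S`. -/
def IsQPDomSet {V : Type*} (G : SimpleGraph V) (k : ℕ) (S : Set V) : Prop :=
  ∀ v ∉ S, 1 ≤ (S ∩ G.neighborSet v).ncard ∧ (S ∩ G.neighborSet v).ncard ≤ k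

/-- The `k`-quasiperfect domination number `γ_{1k}(G)`. -/
noncomputable def qpNum {V : Type*} (G : SimpleGraph V) (k : ℕ) : ℕ :=
  sInf {m | ∃ S : Set V, IsQPDomSet G k S ∧ S.ncard = m}

/-- The domination number `γ(G)`. -/
noncomputable def domNum {V : Type*} (G : SimpleGraph V) : ℕ :=
  sInf {m | ∃ S : Set V, (∀ v ∉ S, ∃ u ∈ S, G.Adj v u) ∧ S.ncard = m}

/-- The maximum degree `Δ(G)`. -/
noncomputable def maxDeg {V : Type*} (G : SimpleGraph V) : ℕ :=
  sSup {d | ∃ v, (G.neighborSet v).ncard = d}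

theorem stmt_0 {V : Type*} [Fintype V] (G : SimpleGraph V)
    (h : domNum G ≤ maxDeg G) :
    ∀ i : ℕ, domNum G ≤ i → i ≤ maxDeg G → qpNum G i = domNum G := by
  intro i hi _
  have hne : {m | ∃ S : Set V, (∀ v ∉ S, ∃ u ∈ S, G.Adj v u) ∧ S.ncard = m}.Nonempty :=
    ⟨(Set.univ : Set V).ncard, Set.univ, fun v hv => absurd (Set.mem_univ v) hv, rfl⟩
  obtain ⟨S, hSdom, hScard⟩ := Nat.sInf_mem hne
  have hSqp : IsQPDomSet G i S := by
    intro v hv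
    constructor
    · obtain ⟨u, hu, hadj⟩ := hSdom v hv
      have : u ∈ S ∩ G.neighborSet v := ⟨hu, hadj⟩
      have := (Set.ncard_pos (Set.toFinite _)).mpr ⟨u, this⟩
      omega
    · calc (S ∩ G.neighborSet v).ncard ≤ S.ncard :=
            Set.ncard_le_ncard Set.inter_subset_left S.toFinite
        _ ≤ i := by rw [hScard]; exact hi
  have h1 : qpNum G i ≤ domNum G :=
    Nat.sInf_le ⟨S, hSqp, hScard⟩
  have hne2 : {m | ∃ S : Set V, IsQPDomSet G i S ∧ S.ncard = m}.Nonempty :=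
    ⟨domNum G, S, hSqp, hScard⟩
  obtain ⟨T, hTqp, hTcard⟩ := Nat.sInf_mem hne2
  have h2 : domNum G ≤ qpNum G i := by
    refine Nat.sInf_le ⟨T, fun v hv => ?_, hTcard⟩
    obtain ⟨u, hu, hadj⟩ :=
      Set.nonempty_of_ncard_ne_zero (Nat.one_le_iff_ne_zero.mp (hTqp v hv).1)
    exact ⟨u, hu, hadj⟩
  omega
end

section
/- For the cycle C_n with n ≥ 4, the 2-quasiperfect domination number equals ⌈n/3⌉, which equals the domination number of C_n. -/
/-- `S` is a perfect dominating set: every vertex not in `S` has exactly one neighbor in `S`. -/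
def IsPerfDomSet {V : Type*} (G : SimpleGraph V) (S : Set V) : Prop :=
  ∀ v ∉ S, (S ∩ G.neighborSet v).ncard = 1

/-- The perfect domination number `γ_{11}(G)`. -/
noncomputable def perfDomNum {V : Type*} (G : SimpleGraph V) : ℕ :=
  sInf {m | ∃ S : Set V, IsPerfDomSet G S ∧ S.ncard = m}

/-- The minimum degree `δ(G)`. -/
noncomputable def minDeg {V : Type*} (G : SimpleGraph V) : ℕ :=
  sInf {d | ∃ v, (G.neighborSet v).ncard = d}


open Finset in
/-- Lower bound: any dominating set of the cycle has size ≥ ⌈n/3⌉. -/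
lemma cycle_dom_lower (m : ℕ) (S : Set (Fin (m + 4)))
    (hS : ∀ v ∉ S, ∃ u ∈ S, (SimpleGraph.cycleGraph (m + 4)).Adj v u) :
    (m + 6) / 3 ≤ S.ncard := by
  classical
  have hg : ∀ v : Fin (m + 4), ∃ u, u ∈ S ∧
      (u = v ∨ (SimpleGraph.cycleGraph (m + 4)).Adj v u) := by
    intro v
    by_cases hv : v ∈ S
    · exact ⟨v, hv, Or.inl rfl⟩
    · obtain ⟨u, hu, hadj⟩ := hS v hv
      exact ⟨u, hu, Or.inr hadj⟩
  choose g hgS hgadj using hg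
  have hfiber : ∀ s ∈ Finset.univ.image g,
      (Finset.univ.filter fun v => g v = s).card ≤ 3 := by
    intro s _
    have hsub : (Finset.univ.filter fun v => g v = s) ⊆ {s, s - 1, s + 1} := by
      intro v hv
      simp only [Finset.mem_filter, Finset.mem_univ, true_and] at hv
      simp only [Finset.mem_insert, Finset.mem_singleton]
      rcases hgadj v with h | h
      · left; rw [← hv, h]
      · rw [hv] at h
        rw [SimpleGraph.cycleGraph_adj (n := m + 2)] at h
        rcases h with h | h
        · right; right
          rw [sub_eq_iff_eq_add] at h
          rw [h]; exact add_comm 1 s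
        · right; left
          rw [sub_eq_iff_eq_add] at h
          rw [eq_sub_iff_add_eq, h]; exact add_comm v 1
    have h3 : ({s, s - 1, s + 1} : Finset (Fin (m + 4))).card ≤ 3 := by
      refine (Finset.card_insert_le _ _).trans ?_
      have := Finset.card_insert_le (s - 1) ({s + 1} : Finset (Fin (m + 4)))
      simp only [Finset.card_singleton] at this
      omega
    exact (Finset.card_le_card hsub).trans h3
  have h1 : (Finset.univ : Finset (Fin (m + 4))).card ≤
      3 * (Finset.univ.image g).card :=
    Finset.card_le_mul_card_image _ 3 hfiber
  have h2 : (Finset.univ.image g) ⊆ S.toFinite.toFinset := by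
    intro u hu
    rw [Finset.mem_image] at hu
    obtain ⟨v, -, rfl⟩ := hu
    exact S.toFinite.mem_toFinset.mpr (hgS v)
  have h3 : S.ncard = S.toFinite.toFinset.card := Set.ncard_eq_toFinset_card _ _
  have h4 := Finset.card_le_card h2
  simp only [Finset.card_univ, Fintype.card_fin] at h1
  omega


/-- The set of multiples of 3 in the cycle. -/
def cycS (m : ℕ) : Set (Fin (m + 4)) :=
  ↑(Finset.univ.filter fun v : Fin (m + 4) => 3 ∣ v.val)

lemma cycS_card (m : ℕ) : (cycS m).ncard = (m + 6) / 3 := by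
  classical
  rw [cycS, Set.ncard_coe_finset]
  rw [← Finset.card_range ((m + 6) / 3)]
  refine (Finset.card_bij'
    (fun a ha => (⟨3 * a, by have := Finset.mem_range.mp ha; omega⟩ : Fin (m + 4)))
    (fun v hv => v.val / 3) ?_ ?_ ?_ ?_).symm
  · intro a ha
    simp only [Finset.mem_filter, Finset.mem_univ, true_and]
    exact ⟨a, rfl⟩
  · intro v hv
    simp only [Finset.mem_filter, Finset.mem_univ, true_and] at hv
    have := v.isLt
    rw [Finset.mem_range]
    show v.val / 3 < (m + 6) / 3
    omega
  · intro a ha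
    simp only []
    show 3 * a / 3 = a
    omega
  · intro v hv
    simp only [Finset.mem_filter, Finset.mem_univ, true_and] at hv
    have := v.isLt
    apply Fin.ext
    show ((⟨3 * (v.val / 3), _⟩ : Fin (m + 4)) : ℕ) = v.val
    simp only []
    omega

lemma cycS_dom (m : ℕ) : ∀ v ∉ cycS m, ∃ u ∈ cycS m,
    u ∈ (SimpleGraph.cycleGraph (m + 4)).neighborSet v := by
  intro v hv
  have hv' : ¬ 3 ∣ v.val := by
    simpa [cycS] using hv
  have hlt := v.isLt
  have hcase : v.val % 3 = 1 ∨ v.val % 3 = 2 := by omega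
  rcases hcase with h1 | h2
  · refine ⟨v - 1, ?_, ?_⟩
    · have hne : v ≠ 0 := by
        intro h; rw [h] at h1; simp at h1
      have hval : ((v - 1 : Fin (m + 4))).val = v.val - 1 := by
        rw [Fin.coe_sub_one, if_neg hne]
      simp only [cycS, Finset.coe_filter, Set.mem_setOf_eq, Finset.mem_univ, true_and]
      rw [hval]; omega
    · rw [SimpleGraph.mem_neighborSet, SimpleGraph.cycleGraph_adj (n := m + 2)]
      left; exact sub_sub_cancel v 1
  · refine ⟨v + 1, ?_, ?_⟩
    · have hval : ((v + 1 : Fin (m + 4))).val = if v = Fin.last (m + 3) then 0 else v.val + 1 :=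
        Fin.val_add_one v
      simp only [cycS, Finset.coe_filter, Set.mem_setOf_eq, Finset.mem_univ, true_and]
      rw [hval]
      split
      · exact ⟨0, rfl⟩
      · omega
    · rw [SimpleGraph.mem_neighborSet, SimpleGraph.cycleGraph_adj (n := m + 2)]
      right; exact add_sub_cancel_left v 1

lemma cycS_qp (m : ℕ) : IsQPDomSet (SimpleGraph.cycleGraph (m + 4)) 2 (cycS m) := by
  intro v hv
  have hN : (SimpleGraph.cycleGraph (m + 4)).neighborSet v = {v - 1, v + 1} :=
    SimpleGraph.cycleGraph_neighborSet (n := m + 2)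
  constructor
  · obtain ⟨u, huS, huN⟩ := cycS_dom m v hv
    have : 0 < (cycS m ∩ (SimpleGraph.cycleGraph (m + 4)).neighborSet v).ncard :=
      (Set.ncard_pos (Set.toFinite _)).mpr ⟨u, huS, huN⟩
    omega
  · calc (cycS m ∩ (SimpleGraph.cycleGraph (m + 4)).neighborSet v).ncard
        ≤ ({v - 1, v + 1} : Set (Fin (m + 4))).ncard := by
          refine Set.ncard_le_ncard ?_ (Set.toFinite _)
          rw [← hN]; exact Set.inter_subset_right
      _ ≤ 2 := by
          refine (Set.ncard_insert_le _ _).trans ?_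
          simp

theorem stmt_6 (n : ℕ) (hn : 4 ≤ n) :
    qpNum (SimpleGraph.cycleGraph n) 2 = (n + 2) / 3 ∧
    domNum (SimpleGraph.cycleGraph n) = (n + 2) / 3 := by
  obtain ⟨m, rfl⟩ : ∃ m, n = m + 4 := ⟨n - 4, by omega⟩
  have hQP := cycS_qp m
  have hcard := cycS_card m
  have hdom0 : ∀ v ∉ cycS m, ∃ u ∈ cycS m, (SimpleGraph.cycleGraph (m + 4)).Adj v u := by
    intro v hv
    obtain ⟨u, h1, h2⟩ := cycS_dom m v hv
    exact ⟨u, h1, h2⟩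
  have hext : ∀ S : Set (Fin (m + 4)), IsQPDomSet (SimpleGraph.cycleGraph (m + 4)) 2 S →
      ∀ v ∉ S, ∃ u ∈ S, (SimpleGraph.cycleGraph (m + 4)).Adj v u := by
    intro S hS v hv
    have h1 := (hS v hv).1
    obtain ⟨u, huS, huN⟩ := Set.nonempty_of_ncard_ne_zero (s := S ∩ (SimpleGraph.cycleGraph (m + 4)).neighborSet v) (by omega)
    exact ⟨u, huS, huN⟩
  constructor
  · apply le_antisymm
    · exact Nat.sInf_le ⟨cycS m, hQP, hcard⟩
    · refine le_csInf ⟨_, cycS m, hQP, hcard⟩ ?_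
      rintro k ⟨S, hS, rfl⟩
      exact cycle_dom_lower m S (hext S hS)
  · apply le_antisymm
    · exact Nat.sInf_le ⟨cycS m, hdom0, hcard⟩
    · refine le_csInf ⟨_, cycS m, hdom0, hcard⟩ ?_
      rintro k ⟨S, hS, rfl⟩
      exact cycle_dom_lower m S hS
end

section
/- For the path P_n with n ≥ 3, the perfect domination number γ_{11}(P_n) equals ⌈n/3⌉. -/
open Finset

lemma count_mod3 (r n : ℕ) (hr : r < 3) :
    ((Finset.range n).filter (fun i => i % 3 = r)).card = (n + 2 - r) / 3 := by
  induction n with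
  | zero => simp; omega
  | succ n ih =>
    rw [Finset.range_add_one, Finset.filter_insert]
    split
    · rw [Finset.card_insert_of_notMem (by simp)]
      omega
    · rw [ih]
      omega

lemma deg_le (n : ℕ) (v : Fin n) [DecidableRel (SimpleGraph.pathGraph n).Adj] :
    ((SimpleGraph.pathGraph n).neighborFinset v).card ≤ 2 := by
  classical
  have himg : ((SimpleGraph.pathGraph n).neighborFinset v).image Fin.val
      ⊆ {v.val + 1, v.val - 1} := by
    intro x hx
    simp only [Finset.mem_image, SimpleGraph.mem_neighborFinset,
      SimpleGraph.pathGraph_adj] at hx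
    obtain ⟨a, ha, rfl⟩ := hx
    simp only [Finset.mem_insert, Finset.mem_singleton]
    omega
  calc ((SimpleGraph.pathGraph n).neighborFinset v).card
      = (((SimpleGraph.pathGraph n).neighborFinset v).image Fin.val).card :=
        (Finset.card_image_of_injective _ Fin.val_injective).symm
    _ ≤ ({v.val + 1, v.val - 1} : Finset ℕ).card := Finset.card_le_card himg
    _ ≤ 2 := Finset.card_insert_le _ _ |>.trans (by simp)

lemma lower (n : ℕ) (S : Set (Fin n)) (hS : IsPerfDomSet (SimpleGraph.pathGraph n) S) :
    n ≤ 3 * S.ncard := by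
  classical
  set G := SimpleGraph.pathGraph n with hG
  set T := S.toFinset with hT
  have hcover : (Finset.univ : Finset (Fin n)) ⊆
      T ∪ T.biUnion (fun t => G.neighborFinset t) := by
    intro v _
    by_cases hv : v ∈ S
    · exact Finset.mem_union_left _ (by simpa [hT])
    · have h1 := hS v hv
      have hne : (S ∩ G.neighborSet v).Nonempty := by
        rw [← Set.ncard_pos (Set.toFinite _)] at *
        omega
      obtain ⟨u, huS, huN⟩ := hne
      refine Finset.mem_union_right _ (Finset.mem_biUnion.2 ⟨u, by simpa [hT], ?_⟩)
      rw [SimpleGraph.mem_neighborFinset]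
      exact (SimpleGraph.mem_neighborSet _ _ _ |>.1 huN).symm
  have hcard := Finset.card_le_card hcover
  have h2 : (T.biUnion (fun t => G.neighborFinset t)).card ≤ 2 * T.card := by
    calc (T.biUnion (fun t => G.neighborFinset t)).card
        ≤ ∑ t ∈ T, (G.neighborFinset t).card := Finset.card_biUnion_le
      _ ≤ ∑ _t ∈ T, 2 := Finset.sum_le_sum (fun t _ => deg_le n t)
      _ = 2 * T.card := by rw [Finset.sum_const]; ring
  have h3 : S.ncard = T.card := Set.ncard_eq_toFinset_card' S
  have h4 := Finset.card_union_le T (T.biUnion (fun t => G.neighborFinset t))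
  simp only [Finset.card_univ, Fintype.card_fin] at hcard
  omega

theorem stmt_7 (n : ℕ) (hn : 3 ≤ n) :
    perfDomNum (SimpleGraph.pathGraph n) = (n + 2) / 3 := by
  classical
  set r : ℕ := if n % 3 = 1 then 0 else 1 with hrdef
  have hr : (n % 3 = 1 ∧ r = 0) ∨ (n % 3 ≠ 1 ∧ r = 1) := by
    by_cases h : n % 3 = 1 <;> simp [hrdef, h]
  set S : Set (Fin n) := ↑(Finset.univ.filter fun i : Fin n => i.val % 3 = r) with hSdef
  have hmem : ∀ x : Fin n, x ∈ S ↔ x.val % 3 = r := by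
    intro x; simp [hSdef]
  have hScard : S.ncard = (n + 2) / 3 := by
    rw [hSdef, Set.ncard_coe_finset]
    have : (Finset.univ.filter fun i : Fin n => i.val % 3 = r).card
        = ((Finset.range n).filter fun i => i % 3 = r).card := by
      rw [Finset.card_filter, Finset.card_filter,
        Fin.sum_univ_eq_sum_range (fun i => if i % 3 = r then 1 else 0) n]
    rw [this, count_mod3 r n (by omega)]
    omega
  have hSdom : IsPerfDomSet (SimpleGraph.pathGraph n) S := by
    intro v hv
    rw [hmem] at hv
    have hvn := v.isLt
    set uval : ℕ := if (v.val + 1) % 3 = r then v.val + 1 else v.val - 1 with hudef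
    have huval : uval < n ∧ uval % 3 = r ∧ (v.val + 1 = uval ∨ uval + 1 = v.val) := by
      rw [hudef]; split <;> omega
    have hkey : S ∩ (SimpleGraph.pathGraph n).neighborSet v = {⟨uval, huval.1⟩} := by
      ext x
      simp only [Set.mem_inter_iff, SimpleGraph.mem_neighborSet,
        SimpleGraph.pathGraph_adj, hmem, Set.mem_singleton_iff, Fin.ext_iff]
      have hxn := x.isLt
      constructor
      · rintro ⟨hx3, hadj⟩
        rcases huval with ⟨h1, h2, h3⟩
        omega
      · rintro h
        rcases huval with ⟨h1, h2, h3⟩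
        omega
    rw [hkey, Set.ncard_singleton]
  apply le_antisymm
  · exact Nat.sInf_le ⟨S, hSdom, hScard⟩
  · refine le_csInf ⟨(n + 2) / 3, S, hSdom, hScard⟩ ?_
    rintro m ⟨S', hS', rfl⟩
    have := lower n S' hS'
    omega
end

section
/- Let G = P_{n−2} ∨ K̄_2 be the join of the path on n−2 vertices with two isolated vertices, where n ≥ 6. Then Δ(G) = n − 2 and the only perfect dominating set of G is V(G), hence γ_{11}(G) = n. -/
/-- The join `G₁ ∨ G₂`: disjoint union plus all edges between the two parts. -/
def joinG {α β : Type*} (G₁ : SimpleGraph α) (G₂ : SimpleGraph β) : SimpleGraph (α ⊕ β) :=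
  SimpleGraph.fromRel (fun u v =>
    match u, v with
    | Sum.inl a, Sum.inl b => G₁.Adj a b
    | Sum.inr a, Sum.inr b => G₂.Adj a b
    | _, _ => True)


open Sum in
lemma joinG_adj_lr {α β : Type*} (G₁ : SimpleGraph α) (G₂ : SimpleGraph β) (a : α) (b : β) :
    (joinG G₁ G₂).Adj (inl a) (inr b) := by
  simp [joinG, SimpleGraph.fromRel_adj]

open Sum in
lemma joinG_adj_rr {α β : Type*} (G₁ : SimpleGraph α) (a b : β) :
    ¬ (joinG G₁ (⊥ : SimpleGraph β)).Adj (inr a) (inr b) := by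
  simp [joinG, SimpleGraph.fromRel_adj]

open Sum in
lemma joinG_adj_ll {α β : Type*} (G₁ : SimpleGraph α) (G₂ : SimpleGraph β) (a b : α) :
    (joinG G₁ G₂).Adj (inl a) (inl b) ↔ G₁.Adj a b := by
  constructor
  · rintro ⟨h1, h2 | h2⟩
    · exact h2
    · exact h2.symm
  · intro h; exact ⟨fun he => h.ne (Sum.inl.inj he), Or.inl h⟩

lemma path_exists_nonadj {m : ℕ} (hm : 4 ≤ m) (a : Fin m) :
    ∃ b : Fin m, b ≠ a ∧ ¬ (SimpleGraph.pathGraph m).Adj a b := by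
  by_cases h : 2 ≤ a.val
  · refine ⟨⟨0, by omega⟩, ?_, ?_⟩
    · intro he; have := congrArg Fin.val he; simp at this; omega
    · rw [SimpleGraph.pathGraph_adj]; simp; omega
  · refine ⟨⟨3, by omega⟩, ?_, ?_⟩
    · intro he; have := congrArg Fin.val he; simp at this; omega
    · rw [SimpleGraph.pathGraph_adj]; simp; omega

lemma path_exists_adj {m : ℕ} (hm : 2 ≤ m) (a : Fin m) :
    ∃ a' : Fin m, a' ≠ a ∧ (SimpleGraph.pathGraph m).Adj a a' := by
  by_cases h : a.val + 1 < m
  · refine ⟨⟨a.val + 1, h⟩, ?_, ?_⟩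
    · intro he; have := congrArg Fin.val he; simp at this
    · rw [SimpleGraph.pathGraph_adj]; simp
  · have h1 : 1 ≤ a.val := by omega
    refine ⟨⟨a.val - 1, by omega⟩, ?_, ?_⟩
    · intro he; have := congrArg Fin.val he; simp at this; omega
    · rw [SimpleGraph.pathGraph_adj]; simp; omega

open Sum in
lemma joinG_nbhd_inr {m : ℕ} (j : Fin 2) :
    (joinG (SimpleGraph.pathGraph m) (⊥ : SimpleGraph (Fin 2))).neighborSet (inr j)
      = Set.range inl := by
  ext x
  obtain a | k := x
  · simp only [SimpleGraph.mem_neighborSet, Set.mem_range]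
    exact ⟨fun _ => ⟨a, rfl⟩, fun _ => ((joinG_adj_lr _ _ a j).symm)⟩
  · simp only [SimpleGraph.mem_neighborSet, Set.mem_range]
    constructor
    · intro h; exact (joinG_adj_rr _ _ _ h).elim
    · rintro ⟨a, ha⟩; cases ha

lemma ncard_range_inl {m : ℕ} :
    (Set.range (Sum.inl : Fin m → Fin m ⊕ Fin 2)).ncard = m := by
  rw [← Set.image_univ, Set.ncard_image_of_injective _ Sum.inl_injective, Set.ncard_univ,
    Nat.card_eq_fintype_card, Fintype.card_fin]

open Sum in
lemma joinG_deg_inl_le {m : ℕ} (i : Fin m) :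
    ((joinG (SimpleGraph.pathGraph m) (⊥ : SimpleGraph (Fin 2))).neighborSet (inl i)).ncard
      ≤ 4 := by
  set G := joinG (SimpleGraph.pathGraph m) (⊥ : SimpleGraph (Fin 2))
  set φ : Fin m ⊕ Fin 2 → ℕ := Sum.elim (fun a => a.val) (fun j => m + j.val) with hφ
  have hinj : Function.Injective φ := by
    rintro (a | a) (b | b) h <;> simp only [hφ, Sum.elim_inl, Sum.elim_inr] at h
    · exact congrArg inl (Fin.ext h)
    · exact absurd h (by have := a.isLt; omega)
    · exact absurd h (by have := b.isLt; omega)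
    · exact congrArg inr (Fin.ext (by omega))
  have hmaps : ∀ x ∈ G.neighborSet (inl i),
      φ x ∈ ({i.val - 1, i.val + 1, m, m + 1} : Set ℕ) := by
    rintro (a | k) hx
    · rw [SimpleGraph.mem_neighborSet, joinG_adj_ll, SimpleGraph.pathGraph_adj] at hx
      simp only [hφ, Sum.elim_inl, Set.mem_insert_iff, Set.mem_singleton_iff]
      omega
    · simp only [hφ, Sum.elim_inr, Set.mem_insert_iff, Set.mem_singleton_iff]
      have := k.isLt
      omega
  calc (G.neighborSet (inl i)).ncard ≤ ({i.val - 1, i.val + 1, m, m + 1} : Set ℕ).ncard :=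
        Set.ncard_le_ncard_of_injOn φ hmaps (hinj.injOn) (Set.toFinite _)
    _ ≤ 4 := by
        refine le_trans (Set.ncard_insert_le _ _) ?_
        refine le_trans (Nat.add_le_add_right (Set.ncard_insert_le _ _) 1) ?_
        refine le_trans (Nat.add_le_add_right (Nat.add_le_add_right (Set.ncard_insert_le _ _) 1) 1) ?_
        simp [Set.ncard_singleton]

theorem stmt_10 (n : ℕ) (hn : 6 ≤ n) :
    maxDeg (joinG (SimpleGraph.pathGraph (n - 2)) (⊥ : SimpleGraph (Fin 2))) = n - 2 ∧
    (∀ S : Set (Fin (n - 2) ⊕ Fin 2),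
      IsPerfDomSet (joinG (SimpleGraph.pathGraph (n - 2)) (⊥ : SimpleGraph (Fin 2))) S →
      S = Set.univ) ∧
    perfDomNum (joinG (SimpleGraph.pathGraph (n - 2)) (⊥ : SimpleGraph (Fin 2))) = n := by
  set m := n - 2 with hmdef
  have hm4 : 4 ≤ m := by omega
  set G := joinG (SimpleGraph.pathGraph m) (⊥ : SimpleGraph (Fin 2)) with hG
  -- degrees
  have hdr : ∀ j : Fin 2, (G.neighborSet (Sum.inr j)).ncard = m := by
    intro j
    rw [hG, joinG_nbhd_inr, ncard_range_inl]
  -- the uniqueness claim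
  have huniv : ∀ S : Set (Fin m ⊕ Fin 2), IsPerfDomSet G S → S = Set.univ := by
    intro S hS
    have hinr : ∀ j : Fin 2, Sum.inr j ∈ S := by
      by_contra hc
      push_neg at hc
      obtain ⟨j, hj⟩ := hc
      have h1 := hS (Sum.inr j) hj
      rw [Set.ncard_eq_one] at h1
      obtain ⟨x, hx⟩ := h1
      have hxmem : x ∈ S ∩ G.neighborSet (Sum.inr j) := by rw [hx]; rfl
      obtain ⟨hxS, hxN⟩ := hxmem
      obtain a | k := x
      swap
      · rw [SimpleGraph.mem_neighborSet] at hxN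
        exact (joinG_adj_rr _ _ _ hxN).elim
      have honly : ∀ b : Fin m, Sum.inl b ∈ S → b = a := by
        intro b hb
        have hmem : (Sum.inl b : Fin m ⊕ Fin 2) ∈ S ∩ G.neighborSet (Sum.inr j) :=
          ⟨hb, by rw [SimpleGraph.mem_neighborSet]; exact (joinG_adj_lr _ _ b j).symm⟩
        rw [hx, Set.mem_singleton_iff] at hmem
        exact Sum.inl.inj hmem
      -- a second inr vertex is in S
      obtain ⟨b, hba, hbadj⟩ := path_exists_nonadj hm4 a
      have hbS : Sum.inl b ∉ S := fun h => hba (honly b h)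
      have h2 := hS (Sum.inl b) hbS
      rw [Set.ncard_eq_one] at h2
      obtain ⟨y, hy⟩ := h2
      have hymem : y ∈ S ∩ G.neighborSet (Sum.inl b) := by rw [hy]; rfl
      obtain ⟨hyS, hyN⟩ := hymem
      obtain c | k := y
      · rw [SimpleGraph.mem_neighborSet, hG, joinG_adj_ll] at hyN
        exact absurd (honly c hyS ▸ hyN).symm hbadj
      have hkj : k ≠ j := fun h => hj (h ▸ hyS)
      -- now a path neighbor of a has two S-neighbors
      obtain ⟨a', ha'ne, ha'adj⟩ := path_exists_adj (by omega) a
      have ha'S : Sum.inl a' ∉ S := fun h => ha'ne (honly a' h)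
      have h3 := hS (Sum.inl a') ha'S
      have hlt : 1 < (S ∩ G.neighborSet (Sum.inl a')).ncard := by
        rw [Set.one_lt_ncard (Set.toFinite _)]
        refine ⟨Sum.inl a, ⟨hxS, ?_⟩, Sum.inr k, ⟨hyS, ?_⟩, by simp⟩
        · rw [SimpleGraph.mem_neighborSet, hG, joinG_adj_ll]
          exact ha'adj.symm
        · rw [SimpleGraph.mem_neighborSet]
          exact joinG_adj_lr _ _ a' k
      omega
    have hinl : ∀ i : Fin m, Sum.inl i ∈ S := by
      intro i
      by_contra hi
      have h1 := hS (Sum.inl i) hi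
      have hlt : 1 < (S ∩ G.neighborSet (Sum.inl i)).ncard := by
        rw [Set.one_lt_ncard (Set.toFinite _)]
        refine ⟨Sum.inr 0, ⟨hinr 0, ?_⟩, Sum.inr 1, ⟨hinr 1, ?_⟩, by simp⟩
        · rw [SimpleGraph.mem_neighborSet]; exact joinG_adj_lr _ _ i 0
        · rw [SimpleGraph.mem_neighborSet]; exact joinG_adj_lr _ _ i 1
      omega
    ext x
    simp only [Set.mem_univ, iff_true]
    obtain a | k := x
    · exact hinl a
    · exact hinr k
  refine ⟨?_, huniv, ?_⟩
  · -- maxDeg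
    have hub : ∀ d ∈ {d | ∃ v, (G.neighborSet v).ncard = d}, d ≤ m := by
      rintro d ⟨v, rfl⟩
      obtain a | k := v
      · exact le_trans (joinG_deg_inl_le a) hm4
      · exact le_of_eq (hdr k)
    have hmem : m ∈ {d | ∃ v, (G.neighborSet v).ncard = d} := ⟨Sum.inr 0, hdr 0⟩
    exact le_antisymm (csSup_le ⟨m, hmem⟩ hub) (le_csSup ⟨m, hub⟩ hmem)
  · -- perfDomNum
    have hcard : (Set.univ : Set (Fin m ⊕ Fin 2)).ncard = n := by
      rw [Set.ncard_univ]
      simp only [Nat.card_eq_fintype_card, Fintype.card_sum, Fintype.card_fin]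
      omega
    have hset : {k | ∃ S : Set (Fin m ⊕ Fin 2), IsPerfDomSet G S ∧ S.ncard = k} = {n} := by
      ext k
      simp only [Set.mem_setOf_eq, Set.mem_singleton_iff]
      constructor
      · rintro ⟨S, hS, rfl⟩
        rw [huniv S hS, hcard]
      · rintro rfl
        exact ⟨Set.univ, fun v hv => absurd (Set.mem_univ v) hv, hcard⟩
    rw [perfDomNum, hset, csInf_singleton]
end

section
/- If G is a graph with Δ(G) = 3 containing two vertices u, v of degree 2 at distance at least 2 joined by an induced path P all of whose internal vertices have degree 3 in G, then V(G) \ V(P) is a perfect dominating set, so γ_{11}(G) ≤ n − |V(P)| ≤ n − 3. -/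
open Classical in
lemma edgeNbr_ncard {V : Type*} [Fintype V] {G : SimpleGraph V} {a b : V}
    (p : G.Walk a b) (hp : p.IsPath) (w : V) (hw : w ∈ p.support) :
    {y | s(w, y) ∈ p.edges}.ncard
      = (if w = a then 0 else 1) + (if w = b then 0 else 1) := by
  induction p with
  | nil =>
    simp only [SimpleGraph.Walk.support_nil, List.mem_singleton] at hw
    subst hw
    simp [SimpleGraph.Walk.edges_nil]
  | @cons a c b h q ih =>
    rw [SimpleGraph.Walk.cons_isPath_iff] at hp
    have hac : a ≠ c := h.ne
    have hab : a ≠ b := fun hh => hp.2 (hh ▸ q.end_mem_support)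
    simp only [SimpleGraph.Walk.support_cons, List.mem_cons] at hw
    have hset : {y | s(w, y) ∈ (SimpleGraph.Walk.cons h q).edges}
        = {y | s(w, y) = s(a, c)} ∪ {y | s(w, y) ∈ q.edges} := by
      ext y
      simp only [SimpleGraph.Walk.edges_cons, List.mem_cons, Set.mem_union, Set.mem_setOf_eq]
    rcases hw with rfl | hw
    · have : {y | s(w, y) ∈ (SimpleGraph.Walk.cons h q).edges} = {c} := by
        rw [hset]
        ext y
        simp only [Set.mem_union, Set.mem_setOf_eq, Set.mem_singleton_iff]
        constructor
        · rintro (heq | hq)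
          · rcases Sym2.eq_iff.mp heq with ⟨-, rfl⟩ | ⟨rfl, rfl⟩
            · rfl
            · exact absurd rfl hac
          · exact absurd (q.fst_mem_support_of_mem_edges hq) hp.2
        · rintro rfl; exact Or.inl rfl
      rw [this]
      simp [hab]
    · have hwa : w ≠ a := fun hh => hp.2 (hh ▸ hw)
      by_cases hwc : w = c
      · subst hwc
        have hkey : {y | s(w, y) ∈ (SimpleGraph.Walk.cons h q).edges}
            = insert a {y | s(w, y) ∈ q.edges} := by
          rw [hset]
          ext y
          simp only [Set.mem_union, Set.mem_setOf_eq, Set.mem_insert_iff]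
          constructor
          · rintro (heq | hq)
            · rcases Sym2.eq_iff.mp heq with ⟨rfl, rfl⟩ | ⟨-, rfl⟩
              · exact absurd rfl hwa
              · exact Or.inl rfl
            · exact Or.inr hq
          · rintro (rfl | hq)
            · exact Or.inl (Sym2.eq_iff.mpr (Or.inr ⟨rfl, rfl⟩))
            · exact Or.inr hq
        have hnot : a ∉ {y | s(w, y) ∈ q.edges} :=
          fun hmem => hp.2 (q.snd_mem_support_of_mem_edges hmem)
        rw [hkey, Set.ncard_insert_of_notMem hnot (Set.toFinite _)]
        rw [ih hp.1 hw]
        simp [hwa, Nat.add_comm]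
      · have hkey : {y | s(w, y) ∈ (SimpleGraph.Walk.cons h q).edges}
            = {y | s(w, y) ∈ q.edges} := by
          rw [hset]
          ext y
          simp only [Set.mem_union, Set.mem_setOf_eq]
          constructor
          · rintro (heq | hq)
            · rcases Sym2.eq_iff.mp heq with ⟨rfl, -⟩ | ⟨rfl, -⟩
              · exact absurd rfl hwa
              · exact absurd rfl hwc
            · exact hq
          · exact fun hq => Or.inr hq
        rw [hkey, ih hp.1 hw, if_neg hwa, if_neg hwc]


theorem stmt_12 {V : Type*} [Fintype V] (G : SimpleGraph V)
    (hconn : G.Connected) (hmax : maxDeg G = 3)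
    (u v : V) (hu : (G.neighborSet u).ncard = 2) (hv : (G.neighborSet v).ncard = 2)
    (hdist : 2 ≤ G.dist u v)
    (p : G.Walk u v) (hp : p.IsPath)
    (hinduced : ∀ a b, a ∈ p.support → b ∈ p.support → G.Adj a b → s(a, b) ∈ p.edges)
    (hdeg : ∀ w ∈ p.support, w ≠ u → w ≠ v → (G.neighborSet w).ncard = 3) :
    IsPerfDomSet G (Set.univ \ {x | x ∈ p.support}) ∧
    perfDomNum G ≤ Fintype.card V - {x | x ∈ p.support}.ncard ∧
    Fintype.card V - {x | x ∈ p.support}.ncard ≤ Fintype.card V - 3 := by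
  classical
  set P : Set V := {x | x ∈ p.support} with hPdef
  have huv : u ≠ v := by
    intro h
    rw [h, SimpleGraph.dist_self] at hdist
    omega
  have hmain : IsPerfDomSet G (Set.univ \ P) := by
    intro w hwP
    have hw : w ∈ p.support := by
      by_contra hc
      exact hwP ⟨Set.mem_univ w, hc⟩
    have hEsub : {y | s(w, y) ∈ p.edges} ⊆ G.neighborSet w :=
      fun y hy => p.adj_of_mem_edges hy
    have hinter : (Set.univ \ P) ∩ G.neighborSet w
        = G.neighborSet w \ {y | s(w, y) ∈ p.edges} := by
      ext y
      simp only [Set.mem_inter_iff, Set.mem_diff, Set.mem_univ, true_and, Set.mem_setOf_eq,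
        hPdef]
      constructor
      · rintro ⟨hyP, hyN⟩
        exact ⟨hyN, fun he => hyP (p.snd_mem_support_of_mem_edges he)⟩
      · rintro ⟨hyN, hyE⟩
        exact ⟨fun hyP => hyE (hinduced w y hw hyP hyN), hyN⟩
    rw [hinter, Set.ncard_diff hEsub (Set.toFinite _), edgeNbr_ncard p hp w hw]
    by_cases hwu : w = u
    · subst hwu
      rw [hu, if_pos rfl, if_neg huv]
    · by_cases hwv : w = v
      · subst hwv
        rw [hv, if_neg hwu, if_pos rfl]
      · rw [hdeg w hw hwu hwv, if_neg hwu, if_neg hwv]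
  have hPcard : P.ncard = p.length + 1 := by
    have h1 : P = ↑p.support.toFinset := by
      ext x; simp [hPdef]
    rw [h1, Set.ncard_coe_finset, List.toFinset_card_of_nodup hp.support_nodup,
      SimpleGraph.Walk.length_support]
  refine ⟨hmain, ?_, ?_⟩
  · have hScard : (Set.univ \ P).ncard = Fintype.card V - P.ncard := by
      rw [Set.ncard_diff (Set.subset_univ P) (Set.toFinite _), Set.ncard_univ,
        Nat.card_eq_fintype_card]
    have : Fintype.card V - P.ncard ∈
        {m | ∃ S : Set V, IsPerfDomSet G S ∧ S.ncard = m} :=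
      ⟨Set.univ \ P, hmain, hScard⟩
    exact Nat.sInf_le this
  · have hlen : 2 ≤ p.length := le_trans hdist (SimpleGraph.dist_le p)
    have : 3 ≤ P.ncard := by omega
    omega
end

section
/- Every connected cubic graph G other than K_4 satisfies γ_{11}(G) ≤ n − 4, where n is the order of G. -/
section Aux

set_option linter.unusedSectionVars false
set_option maxHeartbeats 1000000

variable {V : Type*} [Fintype V] {G : SimpleGraph V}

def IsIP (G : SimpleGraph V) (n : ℕ) (f : ℕ → V) : Prop :=
  (∀ i < n, ∀ j < n, f i = f j → i = j) ∧
  (∀ i < n, ∀ j < n, (G.Adj (f i) (f j) ↔ (i + 1 = j ∨ j + 1 = i)))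

lemma cycle_set {N : ℕ} {f : ℕ → V} (hf : IsIP G N f) {u : V} {i : ℕ}
    (hi2 : 2 ≤ i) (hiN : i < N) (hadj : G.Adj u (f i)) (hadj0 : G.Adj (f 0) u)
    (hu1 : u ≠ f 1) (hmin : ∀ k, 1 ≤ k → k < i → ¬ G.Adj u (f k)) :
    ∃ T : Set V, 4 ≤ T.ncard ∧ ∀ t ∈ T, (T ∩ G.neighborSet t).ncard = 2 := by
  obtain ⟨finj, fadj⟩ := hf
  have hunotf : ∀ k, k ≤ i → u ≠ f k := by
    intro k hk hk'
    rcases Nat.lt_or_ge k 2 with h2 | h2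
    · interval_cases k
      · exact G.ne_of_adj hadj0 hk'.symm
      · exact hu1 hk'
    · have : G.Adj (f 0) (f k) := hk' ▸ hadj0
      rw [fadj 0 (by omega) k (by omega)] at this
      omega
  have adjuf : ∀ k, k ≤ i → (G.Adj u (f k) ↔ (k = 0 ∨ k = i)) := by
    intro k hk
    constructor
    · intro h
      by_contra hc
      push_neg at hc
      exact hmin k (by omega) (by omega) h
    · rintro (rfl | rfl)
      exacts [hadj0.symm, hadj]
  set T : Set V := insert u (f '' Set.Iic i) with hT
  have hmemT : ∀ x, x ∈ T ↔ x = u ∨ ∃ m, m ≤ i ∧ f m = x := by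
    intro x; simp [hT, Set.mem_insert_iff, Set.mem_image, Set.mem_Iic]
  refine ⟨T, ?_, ?_⟩
  · have h1 : (f '' Set.Iic i).ncard = i + 1 := by
      rw [Set.ncard_image_of_injOn (fun a ha b hb hab => finj a (by simp at ha; omega)
        b (by simp at hb; omega) hab)]
      rw [← Finset.coe_Iic, Set.ncard_coe_finset, Nat.card_Iic]
    have h2 : u ∉ f '' Set.Iic i := by
      rintro ⟨m, hm, rfl⟩
      exact hunotf m (by simpa using hm) rfl
    rw [hT, Set.ncard_insert_of_notMem h2]
    omega
  · intro t ht
    rw [hmemT] at ht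
    rcases ht with rfl | ⟨m, hm, rfl⟩
    · -- t = u : T ∩ N(u) = {f 0, f i}
      have heq : T ∩ G.neighborSet t = {f 0, f i} := by
        ext x
        simp only [Set.mem_inter_iff, SimpleGraph.mem_neighborSet, Set.mem_insert_iff,
          Set.mem_singleton_iff, hmemT]
        constructor
        · rintro ⟨rfl | ⟨m, hm, rfl⟩, hadjx⟩
          · exact absurd hadjx (G.irrefl)
          · rcases (adjuf m hm).1 hadjx with rfl | rfl
            · exact Or.inl rfl
            · exact Or.inr rfl
        · rintro (rfl | rfl)
          · exact ⟨Or.inr ⟨0, by omega, rfl⟩, hadj0.symm⟩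
          · exact ⟨Or.inr ⟨i, le_refl _, rfl⟩, hadj⟩
      rw [heq, Set.ncard_pair (fun h => by exact absurd (finj 0 (by omega) i hiN h) (by omega))]
    · -- t = f m
      rcases Nat.eq_zero_or_pos m with rfl | hm0
      · have heq : T ∩ G.neighborSet (f 0) = {u, f 1} := by
          ext x
          simp only [Set.mem_inter_iff, SimpleGraph.mem_neighborSet, Set.mem_insert_iff,
            Set.mem_singleton_iff, hmemT]
          constructor
          · rintro ⟨rfl | ⟨k, hk, rfl⟩, hadjx⟩
            · exact Or.inl rfl
            · rw [fadj 0 (by omega) k (by omega)] at hadjx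
              right; congr 1; omega
          · rintro (rfl | rfl)
            · exact ⟨Or.inl rfl, hadj0⟩
            · exact ⟨Or.inr ⟨1, by omega, rfl⟩, by rw [fadj 0 (by omega) 1 (by omega)]; omega⟩
        rw [heq, Set.ncard_pair (hu1 ·)]
      · rcases Nat.lt_or_ge m i with hmi | hmi
        · -- 0 < m < i : {f (m-1), f (m+1)}
          have heq : T ∩ G.neighborSet (f m) = {f (m-1), f (m+1)} := by
            ext x
            simp only [Set.mem_inter_iff, SimpleGraph.mem_neighborSet, Set.mem_insert_iff,
              Set.mem_singleton_iff, hmemT]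
            constructor
            · rintro ⟨rfl | ⟨k, hk, rfl⟩, hadjx⟩
              · rw [G.adj_comm, adjuf m (by omega)] at hadjx
                omega
              · rw [fadj m (by omega) k (by omega)] at hadjx
                rcases hadjx with h | h
                · right; congr 1; omega
                · left; congr 1; omega
            · rintro (rfl | rfl)
              · exact ⟨Or.inr ⟨m-1, by omega, rfl⟩, by rw [fadj m (by omega) (m-1) (by omega)]; omega⟩
              · exact ⟨Or.inr ⟨m+1, by omega, rfl⟩, by rw [fadj m (by omega) (m+1) (by omega)]; omega⟩
          rw [heq, Set.ncard_pair (fun h => by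
            exact absurd (finj (m-1) (by omega) (m+1) (by omega) h) (by omega))]
        · -- m = i : {f (i-1), u}
          have hmi' : m = i := le_antisymm hm hmi
          subst hmi'
          have heq : T ∩ G.neighborSet (f m) = {u, f (m-1)} := by
            ext x
            simp only [Set.mem_inter_iff, SimpleGraph.mem_neighborSet, Set.mem_insert_iff,
              Set.mem_singleton_iff, hmemT]
            constructor
            · rintro ⟨rfl | ⟨k, hk, rfl⟩, hadjx⟩
              · exact Or.inl rfl
              · rw [fadj m (by omega) k (by omega)] at hadjx
                right; congr 1; omega
            · rintro (rfl | rfl)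
              · exact ⟨Or.inl rfl, hadj.symm⟩
              · exact ⟨Or.inr ⟨m-1, by omega, rfl⟩, by rw [fadj m (by omega) (m-1) (by omega)]; omega⟩
          rw [heq, Set.ncard_pair (hunotf (m-1) (by omega))]

lemma ip_extend {N : ℕ} {f : ℕ → V} (hf : IsIP G N f)
    (hmax : ∀ m, (∃ g : ℕ → V, IsIP G m g) → m ≤ N) (hN : 3 ≤ N)
    {u : V} (hu : G.Adj (f 0) u) (hu1 : u ≠ f 1) :
    ∃ k, 1 ≤ k ∧ k < N ∧ G.Adj u (f k) := by
  by_contra hno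
  push_neg at hno
  obtain ⟨finj, fadj⟩ := hf
  -- u is not any f k for k < N
  have hunotf : ∀ k, k < N → u ≠ f k := by
    intro k hk hk'
    rcases Nat.lt_or_ge k 2 with h2 | h2
    · interval_cases k
      · exact G.ne_of_adj hu hk'.symm
      · exact hu1 hk'
    · have : G.Adj (f 0) (f k) := hk' ▸ hu
      rw [fadj 0 (by omega) k hk] at this
      omega
  set g : ℕ → V := fun k => if k = 0 then u else f (k - 1) with hg
  have hg0 : g 0 = u := rfl
  have hgs : ∀ k, g (k + 1) = f k := fun k => by simp [hg]
  have : IsIP G (N + 1) g := by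
    constructor
    · intro i hi j hj hij
      match i, j with
      | 0, 0 => rfl
      | 0, j + 1 => exact absurd hij (by rw [hg0, hgs]; exact hunotf j (by omega))
      | i + 1, 0 => exact absurd hij.symm (by rw [hg0, hgs]; exact hunotf i (by omega))
      | i + 1, j + 1 =>
        rw [hgs, hgs] at hij
        have := finj i (by omega) j (by omega) hij
        omega
    · intro i hi j hj
      match i, j with
      | 0, 0 =>
        rw [hg0]
        simp [G.irrefl]
      | 0, j + 1 =>
        rw [hg0, hgs]
        constructor
        · intro hadj
          rcases Nat.eq_zero_or_pos j with h | h
          · omega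
          · exact absurd hadj (hno j h (by omega))
        · intro h
          have : j = 0 := by omega
          subst this
          exact hu.symm
      | i + 1, 0 =>
        rw [hg0, hgs, G.adj_comm]
        constructor
        · intro hadj
          rcases Nat.eq_zero_or_pos i with h | h
          · omega
          · exact absurd hadj (hno i h (by omega))
        · intro h
          have : i = 0 := by omega
          subst this
          exact hu.symm
      | i + 1, j + 1 =>
        rw [hgs, hgs, fadj i (by omega) j (by omega)]
        omega
  have := hmax (N + 1) ⟨g, this⟩
  omega

lemma main_T (hcubic : ∀ v : V, (G.neighborSet v).ncard = 3)
    (T : Set V) (hT4 : 4 ≤ T.ncard) (hT : ∀ t ∈ T, (T ∩ G.neighborSet t).ncard = 2) :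
    ∃ S : Set V, (∀ v ∉ S, (S ∩ G.neighborSet v).ncard = 1) ∧ S.ncard ≤ Fintype.card V - 4 := by
  refine ⟨Tᶜ, fun v hv => ?_, ?_⟩
  · have hvT : v ∈ T := by simpa using hv
    have heq : Tᶜ ∩ G.neighborSet v = G.neighborSet v \ (T ∩ G.neighborSet v) := by
      ext x; simp only [Set.mem_inter_iff, Set.mem_compl_iff, Set.mem_diff]; tauto
    rw [heq, Set.ncard_diff (Set.inter_subset_right), hcubic, hT v hvT]
  · have h1 : Tᶜ.ncard = Fintype.card V - T.ncard := by
      have := Set.ncard_add_ncard_compl T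
      rw [Nat.card_eq_fintype_card] at this; omega
    rw [h1]
    omega

lemma k4_of_no_p3 (hconn : G.Connected) (hcubic : ∀ v : V, (G.neighborSet v).ncard = 3)
    (h : ∀ v a b : V, G.Adj v a → G.Adj v b → a ≠ b → G.Adj a b) :
    Nonempty (G ≃g (⊤ : SimpleGraph (Fin 4))) := by
  classical
  obtain ⟨v₀⟩ := hconn.nonempty
  obtain ⟨a, b, c, hab, hac, hbc, hN⟩ := Set.ncard_eq_three.1 (hcubic v₀)
  have hva : G.Adj v₀ a := by rw [← SimpleGraph.mem_neighborSet, hN]; simp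
  have hvb : G.Adj v₀ b := by rw [← SimpleGraph.mem_neighborSet, hN]; simp
  have hvc : G.Adj v₀ c := by rw [← SimpleGraph.mem_neighborSet, hN]; simp
  have hAab : G.Adj a b := h v₀ a b hva hvb hab
  have hAac : G.Adj a c := h v₀ a c hva hvc hac
  have hAbc : G.Adj b c := h v₀ b c hvb hvc hbc
  set K : Set V := {v₀, a, b, c} with hK
  have hsub : ∀ (x : V) (s : Set V), s ⊆ G.neighborSet x → s.ncard = 3 →
      G.neighborSet x = s := by
    intro x s hs hcard
    exact (Set.eq_of_subset_of_ncard_le hs (by rw [hcard, hcubic]) (Set.toFinite _)).symm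
  have hNa : G.neighborSet a = {v₀, b, c} := by
    apply hsub
    · intro x hx
      rcases hx with rfl | rfl | rfl
      · exact hva.symm
      · exact hAab
      · exact hAac
    · rw [Set.ncard_eq_three]
      exact ⟨v₀, b, c, G.ne_of_adj hvb, G.ne_of_adj hvc, hbc, rfl⟩
  have hNb : G.neighborSet b = {v₀, a, c} := by
    apply hsub
    · intro x hx
      rcases hx with rfl | rfl | rfl
      · exact hvb.symm
      · exact hAab.symm
      · exact hAbc
    · rw [Set.ncard_eq_three]
      exact ⟨v₀, a, c, G.ne_of_adj hva, G.ne_of_adj hvc, hac, rfl⟩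
  have hNc : G.neighborSet c = {v₀, a, b} := by
    apply hsub
    · intro x hx
      rcases hx with rfl | rfl | rfl
      · exact hvc.symm
      · exact hAac.symm
      · exact hAbc.symm
    · rw [Set.ncard_eq_three]
      exact ⟨v₀, a, b, G.ne_of_adj hva, G.ne_of_adj hvb, hab, rfl⟩
  have hclosed : ∀ x ∈ K, ∀ y, G.Adj x y → y ∈ K := by
    intro x hx y hxy
    rcases hx with rfl | rfl | rfl | rfl
    · have : y ∈ G.neighborSet x := hxy
      rw [hN] at this
      rcases this with rfl | rfl | rfl <;> simp [hK]
    · have : y ∈ G.neighborSet x := hxy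
      rw [hNa] at this
      rcases this with rfl | rfl | rfl <;> simp [hK]
    · have : y ∈ G.neighborSet x := hxy
      rw [hNb] at this
      rcases this with rfl | rfl | rfl <;> simp [hK]
    · have : y ∈ G.neighborSet x := hxy
      rw [hNc] at this
      rcases this with rfl | rfl | rfl <;> simp [hK]
  have hall : ∀ x : V, x ∈ K := by
    intro x
    obtain ⟨p⟩ := (hconn v₀ x)
    have : ∀ (y z : V) (q : G.Walk y z), y ∈ K → z ∈ K := by
      intro y z q
      induction q with
      | nil => exact id
      | cons hadj q ih => exact fun hy => ih (hclosed _ hy _ hadj)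
    exact this v₀ x p (by simp [hK])
  have hKcard : K.ncard = 4 := by
    have h1 : v₀ ∉ ({a, b, c} : Set V) := by
      simp only [Set.mem_insert_iff, Set.mem_singleton_iff]
      push_neg
      exact ⟨G.ne_of_adj hva, G.ne_of_adj hvb, G.ne_of_adj hvc⟩
    rw [hK, Set.ncard_insert_of_notMem h1, Set.ncard_eq_three.2 ⟨a,b,c,hab,hac,hbc,rfl⟩]
  have hcard : Fintype.card V = 4 := by
    have h2 : K = Set.univ := Set.eq_univ_of_forall hall
    rw [h2, Set.ncard_univ, Nat.card_eq_fintype_card] at hKcard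
    exact hKcard
  have hadjall : ∀ x y : V, x ≠ y → G.Adj x y := by
    intro x y hxy
    have hx := hall x
    have hy := hall y
    rcases hx with rfl | rfl | rfl | rfl <;> rcases hy with rfl | rfl | rfl | rfl <;>
      first
        | exact absurd rfl hxy
        | assumption
        | exact hva | exact hvb | exact hvc
        | exact hva.symm | exact hvb.symm | exact hvc.symm
        | exact hAab.symm | exact hAac.symm | exact hAbc.symm
  refine ⟨⟨Fintype.equivFinOfCardEq hcard, ?_⟩⟩
  intro x y
  simp only [SimpleGraph.top_adj, ne_eq, EmbeddingLike.apply_eq_iff_eq]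
  constructor
  · exact fun hne => hadjall x y hne
  · exact fun hadj => G.ne_of_adj hadj

lemma exists_ip3 (hconn : G.Connected) (hcubic : ∀ v : V, (G.neighborSet v).ncard = 3)
    (hK4 : IsEmpty (G ≃g (⊤ : SimpleGraph (Fin 4)))) :
    ∃ f : ℕ → V, IsIP G 3 f := by
  by_cases hP : ∃ v a b : V, G.Adj v a ∧ G.Adj v b ∧ a ≠ b ∧ ¬G.Adj a b
  · obtain ⟨v, a, b, hva, hvb, hab, hnadj⟩ := hP
    have hav : a ≠ v := fun h => (G.ne_of_adj hva) h.symm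
    have hvb' : v ≠ b := G.ne_of_adj hvb
    refine ⟨fun k => match k with | 0 => a | 1 => v | _ => b, ?_, ?_⟩
    · intro i hi j hj hij
      interval_cases i <;> interval_cases j <;>
        first
          | rfl
          | exact absurd hij hav
          | exact absurd hij hab
          | exact absurd hij.symm hav
          | exact absurd hij hvb'
          | exact absurd hij.symm hab
          | exact absurd hij.symm hvb'
    · intro i hi j hj
      interval_cases i <;> interval_cases j <;> simp [G.irrefl]
      · exact hva.symm
      · exact hnadj
      · exact hva
      · exact hvb
      · exact fun h => hnadj h.symm
      · exact hvb.symm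
  · push_neg at hP
    obtain ⟨iso⟩ := k4_of_no_p3 hconn hcubic fun v a b h1 h2 h3 => hP v a b h1 h2 h3
    exact (hK4.false iso).elim

end Aux

set_option maxHeartbeats 1000000 in
theorem stmt_14 {V : Type*} [Fintype V] (G : SimpleGraph V)
    (hconn : G.Connected) (hcubic : ∀ v : V, (G.neighborSet v).ncard = 3)
    (hK4 : IsEmpty (G ≃g (⊤ : SimpleGraph (Fin 4)))) :
    perfDomNum G ≤ Fintype.card V - 4 := by
  classical
  -- get a T as in cycle_set, then conclude
  have key : ∃ T : Set V, 4 ≤ T.ncard ∧ ∀ t ∈ T, (T ∩ G.neighborSet t).ncard = 2 := by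
    obtain ⟨f3, hf3⟩ := exists_ip3 hconn hcubic hK4
    set SS : Set ℕ := {n | ∃ f : ℕ → V, IsIP G n f} with hSS
    have hne : 3 ∈ SS := ⟨f3, hf3⟩
    have hbdd : ∀ n ∈ SS, n ≤ Fintype.card V := by
      rintro n ⟨f, finj, -⟩
      have : Function.Injective (fun i : Fin n => f i) := by
        intro a b hab
        exact Fin.ext (finj a a.isLt b b.isLt hab)
      simpa using Fintype.card_le_of_injective _ this
    have hbdd' : BddAbove SS := ⟨Fintype.card V, fun n hn => hbdd n hn⟩
    set N := sSup SS with hN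
    have hNmem : N ∈ SS := Nat.sSup_mem ⟨3, hne⟩ hbdd'
    have hN3 : 3 ≤ N := le_csSup hbdd' hne
    obtain ⟨f, hf⟩ := hNmem
    have hmax : ∀ m, (∃ g : ℕ → V, IsIP G m g) → m ≤ N := fun m hm => le_csSup hbdd' hm
    obtain ⟨finj, fadj⟩ := hf
    have hf01 : G.Adj (f 0) (f 1) := by rw [fadj 0 (by omega) 1 (by omega)]; omega
    have hf12 : G.Adj (f 1) (f 2) := by rw [fadj 1 (by omega) 2 (by omega)]; omega
    -- two other neighbors of f 0
    have hdiff : (G.neighborSet (f 0) \ {f 1}).ncard = 2 := by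
      rw [Set.ncard_diff (by simpa using hf01), hcubic]
      simp
    obtain ⟨u, w, huw, hset⟩ := Set.ncard_eq_two.1 hdiff
    have humem : u ∈ G.neighborSet (f 0) \ {f 1} := by rw [hset]; simp
    have hwmem : w ∈ G.neighborSet (f 0) \ {f 1} := by rw [hset]; simp
    have hu : G.Adj (f 0) u := humem.1
    have hw : G.Adj (f 0) w := hwmem.1
    have hu1 : u ≠ f 1 := by simpa using humem.2
    have hw1 : w ≠ f 1 := by simpa using hwmem.2
    -- minimal attachment indices
    have hex_u := ip_extend ⟨finj, fadj⟩ hmax hN3 hu hu1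
    have hex_w := ip_extend ⟨finj, fadj⟩ hmax hN3 hw hw1
    set Pu : ℕ → Prop := fun k => 1 ≤ k ∧ k < N ∧ G.Adj u (f k) with hPu
    set Pw : ℕ → Prop := fun k => 1 ≤ k ∧ k < N ∧ G.Adj w (f k) with hPw
    have hu_ex : ∃ k, Pu k := hex_u
    have hw_ex : ∃ k, Pw k := hex_w
    set iu := Nat.find hu_ex with hiu
    set iw := Nat.find hw_ex with hiw
    obtain ⟨hiu1, hiuN, hiuadj⟩ := Nat.find_spec hu_ex
    obtain ⟨hiw1, hiwN, hiwadj⟩ := Nat.find_spec hw_ex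
    have hminu : ∀ k, 1 ≤ k → k < iu → ¬ G.Adj u (f k) := by
      intro k h1 h2 hadj
      exact Nat.find_min hu_ex h2 ⟨h1, by omega, hadj⟩
    have hminw : ∀ k, 1 ≤ k → k < iw → ¬ G.Adj w (f k) := by
      intro k h1 h2 hadj
      exact Nat.find_min hw_ex h2 ⟨h1, by omega, hadj⟩
    rcases Nat.lt_or_ge iu 2 with hiu2 | hiu2
    · rcases Nat.lt_or_ge iw 2 with hiw2 | hiw2
      · -- both iu = iw = 1 : contradiction with degree of f 1
        exfalso
        have hiu1' : iu = 1 := by omega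
        have hiw1' : iw = 1 := by omega
        have huf1 : G.Adj u (f 1) := hiu1' ▸ hiuadj
        have hwf1 : G.Adj w (f 1) := hiw1' ▸ hiwadj
        have hnotf : ∀ x : V, G.Adj (f 0) x → x ≠ f 1 → x ≠ f 0 ∧ x ≠ f 2 := by
          intro x hx h1
          constructor
          · exact fun h => G.ne_of_adj hx h.symm
          · intro h
            rw [h, fadj 0 (by omega) 2 (by omega)] at hx
            omega
        obtain ⟨hu0, hu2⟩ := hnotf u hu hu1
        obtain ⟨hw0, hw2⟩ := hnotf w hw hw1
        have hsub4 : ({f 0, f 2, u, w} : Set V) ⊆ G.neighborSet (f 1) := by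
          intro x hx
          rcases hx with rfl | rfl | rfl | rfl
          · exact hf01.symm
          · exact hf12
          · exact huf1.symm
          · exact hwf1.symm
        have h02 : f 0 ≠ f 2 := fun h => by have := finj 0 (by omega) 2 (by omega) h; omega
        have hcard4 : ({f 0, f 2, u, w} : Set V).ncard = 4 := by
          rw [Set.ncard_insert_of_notMem (by simp [hu0.symm, hw0.symm, h02]),
            Set.ncard_insert_of_notMem (by simp [hu2.symm, hw2.symm]),
            Set.ncard_insert_of_notMem (by simp [huw]), Set.ncard_singleton]
        have := Set.ncard_le_ncard hsub4 (Set.toFinite _)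
        rw [hcard4, hcubic] at this
        omega
      · exact cycle_set ⟨finj, fadj⟩ hiw2 hiwN hiwadj hw hw1 hminw
    · exact cycle_set ⟨finj, fadj⟩ hiu2 hiuN hiuadj hu hu1 hminu
  obtain ⟨T, hT4, hT⟩ := key
  obtain ⟨S, hS, hScard⟩ := main_T hcubic T hT4 hT
  exact le_trans (Nat.sInf_le ⟨S, hS, rfl⟩) hScard
end

section
/- Every tree T of order n ≥ 7 with maximum degree Δ(T) = 3 satisfies γ_{11}(T) ≤ n − 4. -/
open SimpleGraph

set_option linter.unusedSectionVars false
set_option maxHeartbeats 1000000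

section aux
variable {V : Type*} [Fintype V] {G : SimpleGraph V}

lemma walk_closed' {S : Set V} (hcl : ∀ a ∈ S, ∀ b, G.Adj a b → b ∈ S)
    {a b : V} (w : G.Walk a b) (ha : a ∈ S) : b ∈ S := by
  induction w with
  | nil => exact ha
  | cons h p ih => exact ih (hcl _ ha _ h)

lemma closed_big' (hc : G.Connected) {S : Set V} (hcl : ∀ a ∈ S, ∀ b, G.Adj a b → b ∈ S)
    {x : V} (hx : x ∈ S) : Fintype.card V ≤ S.ncard := by
  have hsub : (Set.univ : Set V) ⊆ S := fun y _ =>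
    walk_closed' hcl (hc.preconnected x y).some hx
  have := Set.ncard_le_ncard hsub (Set.toFinite S)
  simpa [Set.ncard_univ, Nat.card_eq_fintype_card] using this

lemma bridge' [DecidableRel G.Adj] (v : V) : (G.neighborSet v).ncard = G.degree v := by
  rw [← SimpleGraph.card_neighborSet_eq_degree, ← Nat.card_coe_set_eq,
    Nat.card_eq_fintype_card]

lemma eq_single' {x y : V} (hx : (G.neighborSet x).ncard = 1) (h : G.Adj x y) :
    G.neighborSet x = {y} := by
  obtain ⟨z, hz⟩ := Set.ncard_eq_one.mp hx
  have hy : y ∈ G.neighborSet x := h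
  rw [hz] at hy ⊢
  rw [Set.mem_singleton_iff] at hy
  rw [hy]

lemma pair_nb' {u v : V} (hu : (G.neighborSet u).ncard = 2) (hv : G.Adj u v) :
    ∃ p, p ≠ v ∧ p ≠ u ∧ G.neighborSet u = {v, p} := by
  obtain ⟨z, w, hzw, hset⟩ := Set.ncard_eq_two.mp hu
  have hvm : v ∈ G.neighborSet u := hv
  rw [hset] at hvm
  have haz : G.Adj u z := by rw [← SimpleGraph.mem_neighborSet, hset]; exact Set.mem_insert _ _
  have haw : G.Adj u w := by
    rw [← SimpleGraph.mem_neighborSet, hset]; exact Set.mem_insert_of_mem _ rfl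
  rcases hvm with rfl | rfl
  · exact ⟨w, hzw.symm, haw.ne', hset⟩
  · exact ⟨z, hzw, haz.ne', by rw [hset, Set.pair_comm]⟩

lemma pair_inter' (A : Set V) {a b : V} (ha : a ∈ A) (hb : b ∉ A) : Aᶜ ∩ {a, b} = {b} := by
  ext w
  simp only [Set.mem_inter_iff, Set.mem_compl_iff, Set.mem_insert_iff, Set.mem_singleton_iff]
  constructor
  · rintro ⟨hw, rfl | rfl⟩
    · exact absurd ha hw
    · rfl
  · rintro rfl; exact ⟨hb, Or.inr rfl⟩

lemma triple_inter' (A : Set V) {a b c : V} (ha : a ∈ A) (hb : b ∈ A) (hc : c ∉ A) :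
    Aᶜ ∩ {a, b, c} = {c} := by
  ext w
  simp only [Set.mem_inter_iff, Set.mem_compl_iff, Set.mem_insert_iff, Set.mem_singleton_iff]
  constructor
  · rintro ⟨hw, rfl | rfl | rfl⟩
    · exact absurd ha hw
    · exact absurd hb hw
    · rfl
  · rintro rfl; exact ⟨hc, Or.inr (Or.inr rfl)⟩

lemma single_inter' (A : Set V) {b : V} (hb : b ∉ A) : Aᶜ ∩ {b} = {b} := by
  ext w
  simp only [Set.mem_inter_iff, Set.mem_compl_iff, Set.mem_singleton_iff]
  constructor
  · rintro ⟨hw, rfl⟩; rfl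
  · rintro rfl; exact ⟨hb, rfl⟩

lemma no_triangle' (hac : G.IsAcyclic) {u v p : V} (h1 : G.Adj u v) (h2 : G.Adj u p)
    (h3 : G.Adj p v) : False := by
  have hp1 : (Walk.cons h1 Walk.nil).IsPath := by simp [h1.ne]
  have hp2 : (Walk.cons h2 (Walk.cons h3 Walk.nil)).IsPath := by
    simp [h1.ne, h2.ne, h3.ne]
  have := isAcyclic_iff_path_unique.mp hac ⟨_, hp1⟩ ⟨_, hp2⟩
  have hl := congrArg (fun q : G.Path u v => q.1.length) this
  simp at hl

lemma ncard4_le' (a b c d : V) : ({a, b, c, d} : Set V).ncard ≤ 4 := by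
  have h1 := Set.ncard_insert_le a ({b, c, d} : Set V)
  have h2 := Set.ncard_insert_le b ({c, d} : Set V)
  have h3 := Set.ncard_insert_le c ({d} : Set V)
  have h4 : ({d} : Set V).ncard = 1 := Set.ncard_singleton d
  omega

lemma ncard3_le' (a b c : V) : ({a, b, c} : Set V).ncard ≤ 3 := by
  have h2 := Set.ncard_insert_le a ({b, c} : Set V)
  have h3 := Set.ncard_insert_le b ({c} : Set V)
  have h4 : ({c} : Set V).ncard = 1 := Set.ncard_singleton c
  omega

lemma leaves_not_adj' (hc : G.Connected) (hn : 3 ≤ Fintype.card V) {x y : V}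
    (hx : (G.neighborSet x).ncard = 1) (hy : (G.neighborSet y).ncard = 1)
    (hadj : G.Adj x y) : False := by
  have hNx := eq_single' hx hadj
  have hNy := eq_single' hy hadj.symm
  have hcl : ∀ a ∈ ({x, y} : Set V), ∀ b, G.Adj a b → b ∈ ({x, y} : Set V) := by
    rintro a (rfl | rfl) b hb
    · have hb' : b ∈ G.neighborSet a := hb
      rw [hNx, Set.mem_singleton_iff] at hb'
      exact Or.inr hb'
    · have hb' : b ∈ G.neighborSet a := hb
      rw [hNy, Set.mem_singleton_iff] at hb'
      exact Or.inl hb'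
  have h1 := closed_big' hc hcl (show x ∈ ({x, y} : Set V) from Or.inl rfl)
  have h2 : ({x, y} : Set V).ncard ≤ 2 := by
    have := Set.ncard_insert_le x ({y} : Set V)
    have := Set.ncard_singleton (α := V) y
    omega
  omega

lemma use_set' (G : SimpleGraph V) (hcard : 4 ≤ Fintype.card V) (A : Set V) (h4 : A.ncard = 4)
    (hdom : ∀ v ∈ A, (Aᶜ ∩ G.neighborSet v).ncard = 1) :
    perfDomNum G ≤ Fintype.card V - 4 := by
  have hperf : IsPerfDomSet G Aᶜ := fun v hv => hdom v (by simpa using hv)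
  have hc := Set.ncard_add_ncard_compl A
  rw [Nat.card_eq_fintype_card, h4] at hc
  exact Nat.sInf_le ⟨Aᶜ, hperf, by omega⟩

end aux

theorem stmt_15 {V : Type*} [Fintype V] (G : SimpleGraph V)
    (htree : G.IsTree) (hn : 7 ≤ Fintype.card V) (hmax : maxDeg G = 3) :
    perfDomNum G ≤ Fintype.card V - 4 := by
  classical
  have hconn : G.Connected := htree.isConnected
  have hac : G.IsAcyclic := htree.IsAcyclic
  have hV : Nonempty V := Fintype.card_pos_iff.mp (by omega)
  obtain ⟨v0⟩ := hV
  set nd : V → ℕ := fun v => (G.neighborSet v).ncard with hnd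
  -- bounds on degrees
  have hbdd : BddAbove {d | ∃ v, (G.neighborSet v).ncard = d} := by
    refine ⟨Fintype.card V, ?_⟩
    rintro d ⟨v, rfl⟩
    have := Set.ncard_le_ncard (Set.subset_univ (G.neighborSet v)) Set.finite_univ
    simpa [Set.ncard_univ, Nat.card_eq_fintype_card] using this
  have hle3 : ∀ v, nd v ≤ 3 := fun v => hmax ▸ le_csSup hbdd ⟨v, rfl⟩
  have hge1 : ∀ v, 1 ≤ nd v := by
    intro v
    by_contra h
    have hemp : G.neighborSet v = ∅ := (Set.ncard_eq_zero (Set.toFinite _)).mp (show nd v = 0 by omega)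
    have hcl : ∀ a ∈ ({v} : Set V), ∀ b, G.Adj a b → b ∈ ({v} : Set V) := by
      rintro a rfl b hb
      exact absurd (show b ∈ G.neighborSet a from hb) (by rw [hemp]; simp)
    have h1 := closed_big' hconn hcl (Set.mem_singleton v)
    have h2 : ({v} : Set V).ncard = 1 := Set.ncard_singleton v
    omega
  have hex3 : ∃ v, nd v = 3 := by
    have h := Nat.sSup_mem (⟨_, ⟨v0, rfl⟩⟩ :
      {d | ∃ v, (G.neighborSet v).ncard = d}.Nonempty) hbdd
    rw [show sSup {d | ∃ v, (G.neighborSet v).ncard = d} = maxDeg G from rfl, hmax] at h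
    exact h
  -- degree classes
  set L : Finset V := Finset.univ.filter (fun v => nd v = 1) with hLdef
  set T2 : Finset V := Finset.univ.filter (fun v => nd v = 2) with hT2def
  set T3 : Finset V := Finset.univ.filter (fun v => nd v = 3) with hT3def
  have hmemL : ∀ v, v ∈ L ↔ nd v = 1 := fun v => by simp [hLdef]
  have hmemT2 : ∀ v, v ∈ T2 ↔ nd v = 2 := fun v => by simp [hT2def]
  have hmemT3 : ∀ v, v ∈ T3 ↔ nd v = 3 := fun v => by simp [hT3def]
  have hd12 : Disjoint L T2 := Finset.disjoint_left.mpr (by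
    intro a ha hb; rw [hmemL] at ha; rw [hmemT2] at hb; omega)
  have hd3 : Disjoint (L ∪ T2) T3 := Finset.disjoint_left.mpr (by
    intro a ha hb
    rw [hmemT3] at hb
    rcases Finset.mem_union.mp ha with h | h
    · rw [hmemL] at h; omega
    · rw [hmemT2] at h; omega)
  have hunion : L ∪ T2 ∪ T3 = Finset.univ := by
    ext v
    simp only [Finset.mem_union, hmemL, hmemT2, hmemT3, Finset.mem_univ, iff_true]
    have := hge1 v; have := hle3 v; omega
  have hcardU : L.card + T2.card + T3.card = Fintype.card V := by
    rw [← Finset.card_union_of_disjoint hd12, ← Finset.card_union_of_disjoint hd3, hunion,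
      Finset.card_univ]
  have hsum : ∑ v, nd v = 2 * (Fintype.card V - 1) := by
    have h1 : ∑ v, nd v = ∑ v, G.degree v := Finset.sum_congr rfl (fun v _ => bridge' v)
    have h2 := htree.card_edgeFinset
    rw [h1, G.sum_degrees_eq_twice_card_edges]
    omega
  have hsplit : ∑ v, nd v = L.card * 1 + T2.card * 2 + T3.card * 3 := by
    have e0 : ∑ v, nd v = ∑ v ∈ L ∪ T2 ∪ T3, nd v := by rw [hunion]
    have eL : ∑ v ∈ L, nd v = L.card * 1 := by
      rw [Finset.sum_congr rfl (fun v hv => (hmemL v).mp hv), Finset.sum_const, smul_eq_mul]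
    have eT2 : ∑ v ∈ T2, nd v = T2.card * 2 := by
      rw [Finset.sum_congr rfl (fun v hv => (hmemT2 v).mp hv), Finset.sum_const, smul_eq_mul]
    have eT3 : ∑ v ∈ T3, nd v = T3.card * 3 := by
      rw [Finset.sum_congr rfl (fun v hv => (hmemT3 v).mp hv), Finset.sum_const, smul_eq_mul]
    rw [e0, Finset.sum_union hd3, Finset.sum_union hd12, eL, eT2, eT3]
  have hLeq : L.card = T3.card + 2 := by omega
  obtain ⟨w3, hw3⟩ := hex3
  have hw3T3 : w3 ∈ T3 := (hmemT3 w3).mpr hw3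
  have hT3pos : 1 ≤ T3.card := Finset.card_pos.mpr ⟨w3, hw3T3⟩
  by_cases hT3 : 2 ≤ T3.card
  · -- at least 4 leaves
    obtain ⟨t, hts, htc⟩ := Finset.exists_subset_card_eq (show 4 ≤ L.card by omega)
    apply use_set' G (by omega) (↑t : Set V) (by rw [Set.ncard_coe_finset, htc])
    intro v hv
    have hvt : v ∈ t := hv
    have hvL : nd v = 1 := (hmemL v).mp (hts hvt)
    obtain ⟨z, hz⟩ := Set.ncard_eq_one.mp hvL
    have hadj : G.Adj v z := by rw [← SimpleGraph.mem_neighborSet, hz]; rfl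
    have hzt : z ∉ (↑t : Set V) := by
      intro hzt
      exact leaves_not_adj' hconn (by omega) hvL ((hmemL z).mp (hts hzt)) hadj
    rw [show G.neighborSet v = {z} from hz, single_inter' _ hzt, Set.ncard_singleton]
  · -- exactly one degree-3 vertex
    have hT3card : T3.card = 1 := by omega
    obtain ⟨c, hcT3⟩ := Finset.card_eq_one.mp hT3card
    have hcd : nd c = 3 := (hmemT3 c).mp (hcT3 ▸ Finset.mem_singleton_self c)
    have honly3 : ∀ v, nd v = 3 → v = c := by
      intro v hv
      have : v ∈ T3 := (hmemT3 v).mpr hv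
      rw [hcT3, Finset.mem_singleton] at this
      exact this
    have hLcard : L.card = 3 := by omega
    by_cases hpair : ∃ u v, nd u = 2 ∧ nd v = 2 ∧ G.Adj u v
    · -- Case 2a
      obtain ⟨u, v, hu2, hv2, huv⟩ := hpair
      obtain ⟨p, hpv, hpu, hNu⟩ := pair_nb' hu2 huv
      obtain ⟨q, hqu, hqv, hNv⟩ := pair_nb' hv2 huv.symm
      have hadj_up : G.Adj u p := by
        rw [← SimpleGraph.mem_neighborSet, hNu]; exact Set.mem_insert_of_mem _ rfl
      have hadj_vq : G.Adj v q := by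
        rw [← SimpleGraph.mem_neighborSet, hNv]; exact Set.mem_insert_of_mem _ rfl
      have hpq : p ≠ q := by
        rintro rfl
        exact no_triangle' hac huv hadj_up hadj_vq.symm
      have hnotboth : ¬ (nd p = 1 ∧ nd q = 1) := by
        rintro ⟨hp1, hq1⟩
        have hNp := eq_single' hp1 hadj_up.symm
        have hNq := eq_single' hq1 hadj_vq.symm
        have hcl : ∀ a ∈ ({u, v, p, q} : Set V), ∀ b, G.Adj a b → b ∈ ({u, v, p, q} : Set V) := by
          rintro a (rfl | rfl | rfl | rfl) b hb
          · have hb' : b ∈ G.neighborSet a := hb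
            rw [hNu] at hb'
            rcases hb' with rfl | hb'
            · exact Or.inr (Or.inl rfl)
            · rw [Set.mem_singleton_iff] at hb'; exact Or.inr (Or.inr (Or.inl hb'))
          · have hb' : b ∈ G.neighborSet a := hb
            rw [hNv] at hb'
            rcases hb' with rfl | hb'
            · exact Or.inl rfl
            · rw [Set.mem_singleton_iff] at hb'; exact Or.inr (Or.inr (Or.inr hb'))
          · have hb' : b ∈ G.neighborSet a := hb
            rw [hNp, Set.mem_singleton_iff] at hb'
            exact Or.inl hb'
          · have hb' : b ∈ G.neighborSet a := hb
            rw [hNq, Set.mem_singleton_iff] at hb'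
            exact Or.inr (Or.inl hb')
        have h1 := closed_big' hconn hcl (show u ∈ ({u, v, p, q} : Set V) from Or.inl rfl)
        have h2 := ncard4_le' u v p q
        omega
      have hint : (L ∩ {p, q}).card ≤ 1 := by
        by_contra h
        have hsub : L ∩ {p, q} ⊆ {p, q} := Finset.inter_subset_right
        have hle2 : ({p, q} : Finset V).card ≤ 2 := Finset.card_insert_le _ _ |>.trans (by simp)
        have heq : L ∩ {p, q} = {p, q} := Finset.eq_of_subset_of_card_le hsub
          (by have := Finset.card_le_card hsub; omega)
        have hpL : p ∈ L := Finset.mem_of_mem_inter_left (heq ▸ (by simp : p ∈ ({p, q} : Finset V)))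
        have hqL : q ∈ L := Finset.mem_of_mem_inter_left (heq ▸ (by simp : q ∈ ({p, q} : Finset V)))
        exact hnotboth ⟨(hmemL p).mp hpL, (hmemL q).mp hqL⟩
      have hsd := Finset.card_sdiff_add_card_inter L ({p, q} : Finset V)
      obtain ⟨x, hx, y, hy, hxy⟩ := Finset.one_lt_card.mp
        (show 1 < (L \ ({p, q} : Finset V)).card by omega)
      rw [Finset.mem_sdiff] at hx hy
      have hx1 : nd x = 1 := (hmemL x).mp hx.1
      have hy1 : nd y = 1 := (hmemL y).mp hy.1
      have hxp : x ≠ p := fun h => hx.2 (by simp [h])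
      have hxq : x ≠ q := fun h => hx.2 (by simp [h])
      have hyp : y ≠ p := fun h => hy.2 (by simp [h])
      have hyq : y ≠ q := fun h => hy.2 (by simp [h])
      have hux : u ≠ x := fun h => by rw [h] at hu2; omega
      have huy : u ≠ y := fun h => by rw [h] at hu2; omega
      have hvx : v ≠ x := fun h => by rw [h] at hv2; omega
      have hvy : v ≠ y := fun h => by rw [h] at hv2; omega
      set A : Set V := {u, v, x, y} with hAdef
      have hpA : p ∉ A := by
        simp only [hAdef, Set.mem_insert_iff, Set.mem_singleton_iff]
        push_neg
        exact ⟨hpu, hpv, hxp.symm, hyp.symm⟩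
      have hqA : q ∉ A := by
        simp only [hAdef, Set.mem_insert_iff, Set.mem_singleton_iff]
        push_neg
        exact ⟨hqu, hqv, hxq.symm, hyq.symm⟩
      have hA4 : A.ncard = 4 := by
        rw [hAdef, Set.ncard_insert_of_notMem (by
            simp only [Set.mem_insert_iff, Set.mem_singleton_iff]; push_neg
            exact ⟨huv.ne, hux, huy⟩),
          Set.ncard_insert_of_notMem (by
            simp only [Set.mem_insert_iff, Set.mem_singleton_iff]; push_neg
            exact ⟨hvx, hvy⟩),
          Set.ncard_insert_of_notMem (by simpa using hxy), Set.ncard_singleton]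
      apply use_set' G (by omega) A hA4
      intro w hw
      have hvA : v ∈ A := Or.inr (Or.inl rfl)
      have huA : u ∈ A := Or.inl rfl
      rcases hw with rfl | rfl | rfl | rfl
      · rw [show G.neighborSet w = {v, p} from hNu, pair_inter' A hvA hpA, Set.ncard_singleton]
      · rw [show G.neighborSet w = {u, q} from hNv, pair_inter' A huA hqA, Set.ncard_singleton]
      · obtain ⟨z, hz⟩ := Set.ncard_eq_one.mp hx1
        have hadjxz : G.Adj w z := by rw [← SimpleGraph.mem_neighborSet, hz]; rfl
        have hzA : z ∉ A := by
          rintro (rfl | rfl | rfl | rfl)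
          · have hm : w ∈ G.neighborSet z := hadjxz.symm
            rw [hNu] at hm
            rcases hm with rfl | hm
            · exact hvx rfl
            · rw [Set.mem_singleton_iff] at hm; exact hxp hm
          · have hm : w ∈ G.neighborSet z := hadjxz.symm
            rw [hNv] at hm
            rcases hm with rfl | hm
            · exact hux rfl
            · rw [Set.mem_singleton_iff] at hm; exact hxq hm
          · exact hadjxz.ne rfl
          · exact leaves_not_adj' hconn (by omega) hx1 hy1 hadjxz
        rw [show G.neighborSet w = {z} from hz, single_inter' _ hzA, Set.ncard_singleton]
      · obtain ⟨z, hz⟩ := Set.ncard_eq_one.mp hy1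
        have hadjyz : G.Adj w z := by rw [← SimpleGraph.mem_neighborSet, hz]; rfl
        have hzA : z ∉ A := by
          rintro (rfl | rfl | rfl | rfl)
          · have hm : w ∈ G.neighborSet z := hadjyz.symm
            rw [hNu] at hm
            rcases hm with rfl | hm
            · exact hvy rfl
            · rw [Set.mem_singleton_iff] at hm; exact hyp hm
          · have hm : w ∈ G.neighborSet z := hadjyz.symm
            rw [hNv] at hm
            rcases hm with rfl | hm
            · exact huy rfl
            · rw [Set.mem_singleton_iff] at hm; exact hyq hm
          · exact (leaves_not_adj' hconn (by omega) hy1 hx1 hadjyz).elim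
          · exact hadjyz.ne rfl
        rw [show G.neighborSet w = {z} from hz, single_inter' _ hzA, Set.ncard_singleton]
    · -- Case 2b
      push_neg at hpair
      -- every degree-2 vertex is adjacent to c
      have hT2adj : ∀ v, nd v = 2 → G.Adj c v := by
        intro v hv
        obtain ⟨z, w, hzw, hNv⟩ := Set.ncard_eq_two.mp hv
        have hazv : G.Adj v z := by
          rw [← SimpleGraph.mem_neighborSet, hNv]; exact Set.mem_insert _ _
        have hawv : G.Adj v w := by
          rw [← SimpleGraph.mem_neighborSet, hNv]; exact Set.mem_insert_of_mem _ rfl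
        have hz2 : nd z ≠ 2 := fun h => hpair v z hv h hazv
        have hw2 : nd w ≠ 2 := fun h => hpair v w hv h hawv
        have hnot11 : ¬ (nd z = 1 ∧ nd w = 1) := by
          rintro ⟨hz1, hw1⟩
          have hNz := eq_single' hz1 hazv.symm
          have hNw := eq_single' hw1 hawv.symm
          have hcl : ∀ a ∈ ({v, z, w} : Set V), ∀ b, G.Adj a b → b ∈ ({v, z, w} : Set V) := by
            rintro a (rfl | rfl | rfl) b hb
            · have hb' : b ∈ G.neighborSet a := hb
              rw [hNv] at hb'
              rcases hb' with rfl | hb'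
              · exact Or.inr (Or.inl rfl)
              · rw [Set.mem_singleton_iff] at hb'; exact Or.inr (Or.inr hb')
            · have hb' : b ∈ G.neighborSet a := hb
              rw [hNz, Set.mem_singleton_iff] at hb'; exact Or.inl hb'
            · have hb' : b ∈ G.neighborSet a := hb
              rw [hNw, Set.mem_singleton_iff] at hb'; exact Or.inl hb'
          have h1 := closed_big' hconn hcl (show v ∈ ({v, z, w} : Set V) from Or.inl rfl)
          have h2 := ncard3_le' v z w
          omega
        have hz1b := hge1 z; have hz3b := hle3 z
        have hw1b := hge1 w; have hw3b := hle3 w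
        rcases (show nd z = 3 ∨ nd w = 3 by omega) with h3 | h3
        · rw [← honly3 z h3]; exact hazv.symm
        · rw [← honly3 w h3]; exact hawv.symm
      -- the three neighbors of c
      obtain ⟨m1, m2, m3, h12, h13, h23, hNceq⟩ := Set.ncard_eq_three.mp hcd
      have ha1 : G.Adj c m1 := by
        rw [← SimpleGraph.mem_neighborSet, hNceq]; exact Set.mem_insert _ _
      have ha2 : G.Adj c m2 := by
        rw [← SimpleGraph.mem_neighborSet, hNceq]
        exact Set.mem_insert_of_mem _ (Set.mem_insert _ _)
      have ha3 : G.Adj c m3 := by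
        rw [← SimpleGraph.mem_neighborSet, hNceq]
        exact Set.mem_insert_of_mem _ (Set.mem_insert_of_mem _ rfl)
      set NB : Finset V := Finset.univ.filter (fun v => G.Adj c v) with hNB
      have hNBdef : ∀ v, v ∈ NB ↔ G.Adj c v := by intro v; simp [hNB]
      have hNBcard : NB.card = 3 := by
        have hcoe : (↑NB : Set V) = G.neighborSet c := by
          ext w; simp [hNB, SimpleGraph.mem_neighborSet]
        rw [← Set.ncard_coe_finset NB, hcoe]
        exact hcd
      have hT2NB : T2 ⊆ NB := fun v hv => (hNBdef v).mpr (hT2adj v ((hmemT2 v).mp hv))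
      have hT2eq : T2 = NB := Finset.eq_of_subset_of_card_le hT2NB (by omega)
      have hdeg2 : ∀ v, G.Adj c v → nd v = 2 := by
        intro v hv
        exact (hmemT2 v).mp (by rw [hT2eq]; exact (hNBdef v).mpr hv)
      have hm1d : nd m1 = 2 := hdeg2 m1 ha1
      have hm2d : nd m2 = 2 := hdeg2 m2 ha2
      have hm3d : nd m3 = 2 := hdeg2 m3 ha3
      obtain ⟨l, hlc, hlm3, hNm3⟩ := pair_nb' hm3d ha3.symm
      have hadj_m3l : G.Adj m3 l := by
        rw [← SimpleGraph.mem_neighborSet, hNm3]; exact Set.mem_insert_of_mem _ rfl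
      have hlm1 : l ≠ m1 := by rintro rfl; exact hpair m3 l hm3d hm1d hadj_m3l
      have hlm2 : l ≠ m2 := by rintro rfl; exact hpair m3 l hm3d hm2d hadj_m3l
      have hl1 : nd l = 1 := by
        have hb1 := hge1 l; have hb3 := hle3 l
        have hne2 : nd l ≠ 2 := by
          intro h2'
          have hm : l ∈ G.neighborSet c := hT2adj l h2'
          rw [hNceq] at hm
          rcases hm with rfl | rfl | rfl
          · exact hlm1 rfl
          · exact hlm2 rfl
          · exact hlm3 rfl
        have hne3 : nd l ≠ 3 := fun h3' => hlc (honly3 l h3')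
        omega
      have hNl : G.neighborSet l = {m3} := eq_single' hl1 hadj_m3l.symm
      set A : Set V := {c, m1, m2, l} with hAdef
      have hm3A : m3 ∉ A := by
        simp only [hAdef, Set.mem_insert_iff, Set.mem_singleton_iff]; push_neg
        exact ⟨ha3.ne', h13.symm, h23.symm, fun h => hlm3 h.symm⟩
      have hA4 : A.ncard = 4 := by
        rw [hAdef, Set.ncard_insert_of_notMem (by
            simp only [Set.mem_insert_iff, Set.mem_singleton_iff]; push_neg
            exact ⟨ha1.ne, ha2.ne, fun h => hlc h.symm⟩),
          Set.ncard_insert_of_notMem (by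
            simp only [Set.mem_insert_iff, Set.mem_singleton_iff]; push_neg
            exact ⟨h12, fun h => hlm1 h.symm⟩),
          Set.ncard_insert_of_notMem (by
            simp only [Set.mem_singleton_iff]; exact fun h => hlm2 h.symm),
          Set.ncard_singleton]
      apply use_set' G (by omega) A hA4
      intro w hw
      have hcA : c ∈ A := Or.inl rfl
      have hm1A : m1 ∈ A := Or.inr (Or.inl rfl)
      have hm2A : m2 ∈ A := Or.inr (Or.inr (Or.inl rfl))
      rcases hw with rfl | rfl | rfl | rfl
      · rw [show G.neighborSet w = {m1, m2, m3} from hNceq, triple_inter' A hm1A hm2A hm3A,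
          Set.ncard_singleton]
      · -- w = m1
        obtain ⟨z1, hz1c, hz1m1, hNm1⟩ := pair_nb' hm1d ha1.symm
        have hadj_m1z1 : G.Adj w z1 := by
          rw [← SimpleGraph.mem_neighborSet, hNm1]; exact Set.mem_insert_of_mem _ rfl
        have hz1A : z1 ∉ A := by
          rintro (rfl | rfl | rfl | rfl)
          · exact hz1c rfl
          · exact hz1m1 rfl
          · exact hpair w z1 hm1d hm2d hadj_m1z1
          · have hm : w ∈ G.neighborSet z1 := hadj_m1z1.symm
            rw [hNl, Set.mem_singleton_iff] at hm
            exact h13 hm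
        rw [show G.neighborSet w = {c, z1} from hNm1, pair_inter' A hcA hz1A,
          Set.ncard_singleton]
      · -- w = m2
        obtain ⟨z2, hz2c, hz2m2, hNm2⟩ := pair_nb' hm2d ha2.symm
        have hadj_m2z2 : G.Adj w z2 := by
          rw [← SimpleGraph.mem_neighborSet, hNm2]; exact Set.mem_insert_of_mem _ rfl
        have hz2A : z2 ∉ A := by
          rintro (rfl | rfl | rfl | rfl)
          · exact hz2c rfl
          · exact hpair w z2 hm2d hm1d hadj_m2z2
          · exact hz2m2 rfl
          · have hm : w ∈ G.neighborSet z2 := hadj_m2z2.symm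
            rw [hNl, Set.mem_singleton_iff] at hm
            exact h23 hm
        rw [show G.neighborSet w = {c, z2} from hNm2, pair_inter' A hcA hz2A,
          Set.ncard_singleton]
      · -- w = l
        rw [show G.neighborSet w = {m3} from hNl, single_inter' A hm3A, Set.ncard_singleton]
end

section
/- Let G = G_1 ∨ G_2 be the join of two graphs. Then γ_{11}(G) = 1 if and only if G_1 or G_2 has a universal vertex. -/
theorem stmt_16 {α β : Type*} [Fintype α] [Fintype β]
    (G₁ : SimpleGraph α) (G₂ : SimpleGraph β) :
    perfDomNum (joinG G₁ G₂) = 1 ↔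
      (∃ u : α, ∀ w : α, w ≠ u → G₁.Adj u w) ∨ (∃ u : β, ∀ w : β, w ≠ u → G₂.Adj u w) := by
  constructor
  · intro h
    have hT : ({m | ∃ S : Set (α ⊕ β), IsPerfDomSet (joinG G₁ G₂) S ∧ S.ncard = m}).Nonempty := by
      by_contra hc
      rw [Set.not_nonempty_iff_eq_empty] at hc
      rw [perfDomNum, hc, Nat.sInf_empty] at h
      exact one_ne_zero h.symm
    have h1 : 1 ∈ {m | ∃ S : Set (α ⊕ β), IsPerfDomSet (joinG G₁ G₂) S ∧ S.ncard = m} := by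
      have := Nat.sInf_mem hT
      rwa [show sInf {m | ∃ S : Set (α ⊕ β), IsPerfDomSet (joinG G₁ G₂) S ∧ S.ncard = m} = 1
        from h] at this
    obtain ⟨S, hS, hcard⟩ := h1
    obtain ⟨x, rfl⟩ := Set.ncard_eq_one.mp hcard
    have key : ∀ v, v ∉ ({x} : Set (α ⊕ β)) → x ∈ (joinG G₁ G₂).neighborSet v := by
      intro v hv
      obtain ⟨a, ha⟩ := Set.ncard_eq_one.mp (hS v hv)
      have haa : a ∈ ({x} : Set (α ⊕ β)) ∩ (joinG G₁ G₂).neighborSet v := by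
        rw [ha]; exact rfl
      obtain ⟨h1, h2⟩ := haa
      rwa [Set.mem_singleton_iff.mp h1] at h2
    cases x with
    | inl u =>
      left
      refine ⟨u, fun w hw => ?_⟩
      have := key (Sum.inl w) (by simp [hw])
      simp only [SimpleGraph.mem_neighborSet, joinG, SimpleGraph.fromRel_adj] at this
      rcases this.2 with h' | h'
      · exact h'.symm
      · exact h'
    | inr u =>
      right
      refine ⟨u, fun w hw => ?_⟩
      have := key (Sum.inr w) (by simp [hw])
      simp only [SimpleGraph.mem_neighborSet, joinG, SimpleGraph.fromRel_adj] at this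
      rcases this.2 with h' | h'
      · exact h'.symm
      · exact h'
  · intro h
    have key : ∃ x : α ⊕ β, ∀ v, v ≠ x → (joinG G₁ G₂).Adj x v := by
      rcases h with ⟨u, hu⟩ | ⟨u, hu⟩
      · refine ⟨Sum.inl u, fun v hv => ?_⟩
        cases v with
        | inl w =>
          have hwu : w ≠ u := fun hh => hv (by rw [hh])
          simp only [joinG, SimpleGraph.fromRel_adj]
          exact ⟨fun hh => hv hh.symm, Or.inl (hu w hwu)⟩
        | inr w =>
          simp only [joinG, SimpleGraph.fromRel_adj]
          exact ⟨by simp, Or.inl trivial⟩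
      · refine ⟨Sum.inr u, fun v hv => ?_⟩
        cases v with
        | inl w =>
          simp only [joinG, SimpleGraph.fromRel_adj]
          exact ⟨by simp, Or.inl trivial⟩
        | inr w =>
          have hwu : w ≠ u := fun hh => hv (by rw [hh])
          simp only [joinG, SimpleGraph.fromRel_adj]
          exact ⟨fun hh => hv hh.symm, Or.inl (hu w hwu)⟩
    obtain ⟨x, hx⟩ := key
    have hPD : IsPerfDomSet (joinG G₁ G₂) ({x} : Set (α ⊕ β)) := by
      intro v hv
      have hxN : x ∈ (joinG G₁ G₂).neighborSet v :=
        ((hx v (by simpa using hv)).symm : (joinG G₁ G₂).Adj v x)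
      rw [Set.inter_eq_self_of_subset_left (Set.singleton_subset_iff.mpr hxN),
        Set.ncard_singleton]
    have hmem : 1 ∈ {m | ∃ S : Set (α ⊕ β), IsPerfDomSet (joinG G₁ G₂) S ∧ S.ncard = m} :=
      ⟨{x}, hPD, Set.ncard_singleton x⟩
    have hle : perfDomNum (joinG G₁ G₂) ≤ 1 := Nat.sInf_le hmem
    have hne : perfDomNum (joinG G₁ G₂) ≠ 0 := by
      intro h0
      have := Nat.sInf_mem (⟨1, hmem⟩ : Set.Nonempty _)
      rw [show sInf {m | ∃ S : Set (α ⊕ β), IsPerfDomSet (joinG G₁ G₂) S ∧ S.ncard = m}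
        = 0 from h0] at this
      obtain ⟨S, hS, hc⟩ := this
      have hSe : S = ∅ := (Set.ncard_eq_zero (Set.toFinite S)).mp hc
      have := hS x (by rw [hSe]; exact Set.notMem_empty x)
      rw [hSe, Set.empty_inter, Set.ncard_empty] at this
      exact zero_ne_one this
    omega
end
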